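/- Let Ω ⊆ ℝⁿ be a nonempty compact convex set, let u, v : ℝⁿ → ℝ be convex functions with v differentiable. Let {x^{(l)}}_{l≥0} be any sequence with x^{(0)} ∈ Ω and x^{(l+1)} ∈ argmin_{x∈Ω} (u(x) − xᵀ∇v(x^{(l)})) for every l (the argmin is nonempty since convex real-valued functions on ℝⁿ are continuous and Ω is compact). Then the sequence of objective values u(x^{(l)}) − v(x^{(l)}) is nonincreasing and converges to a real limit. -/

import Mathlib

open Filter

lemma grad_ineq {E : Type*} [NormedAddCommGroup E] [NormedSpace ℝ E]
    {v : E → ℝ} (hv : ConvexOn ℝ Set.univ v) (hvd : Differentiable ℝ v) (a b : E) :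
    v a + fderiv ℝ v a (b - a) ≤ v b := by
  set g : ℝ → ℝ := fun t => v (a + t • (b - a)) with hg
  have hga : ConvexOn ℝ Set.univ g := by
    have := hv.comp_affineMap
      (AffineMap.mk (fun t : ℝ => a + t • (b - a))
        { toFun := fun t : ℝ => t • (b - a)
          map_add' := by intro p q; simp [add_smul]
          map_smul' := by intro c p; simp [smul_smul] } (by intro p q; simp [add_smul]; abel))
    exact this.subset (Set.subset_univ _) (convex_univ)
  have hder : HasDerivAt g (fderiv ℝ v a (b - a)) 0 := by
    have hc : HasDerivAt (fun t : ℝ => a + t • (b - a)) (b - a) 0 := by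
      simpa using ((hasDerivAt_id (0:ℝ)).smul_const (b - a)).const_add a
    have := ((hvd (a + (0:ℝ) • (b - a))).hasFDerivAt).comp_hasDerivAt 0 hc
    simp only [zero_smul, add_zero] at this
    exact this
  have hslope := hga.le_slope_of_hasDerivAt (Set.mem_univ (0:ℝ)) (Set.mem_univ (1:ℝ))
    one_pos hder
  have : fderiv ℝ v a (b - a) ≤ g 1 - g 0 := by
    simpa [slope_def_field] using hslope
  have hg0 : g 0 = v a := by simp [hg]
  have hg1 : g 1 = v b := by simp [hg]
  rw [hg0, hg1] at this
  linarith

theorem stmt_11 (n : ℕ) (Ω : Set (Fin n → ℝ)) (hne : Ω.Nonempty)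
    (hcomp : IsCompact Ω) (hconv : Convex ℝ Ω)
    (u v : (Fin n → ℝ) → ℝ)
    (hu : ConvexOn ℝ Set.univ u) (hv : ConvexOn ℝ Set.univ v)
    (hvd : Differentiable ℝ v)
    (x : ℕ → Fin n → ℝ) (hx0 : x 0 ∈ Ω)
    (hstep : ∀ l, x (l + 1) ∈ Ω ∧
      ∀ z ∈ Ω, u (x (l + 1)) - fderiv ℝ v (x l) (x (l + 1)) ≤ u z - fderiv ℝ v (x l) z) :
    (∀ l, u (x (l + 1)) - v (x (l + 1)) ≤ u (x l) - v (x l)) ∧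
    ∃ L : ℝ, Filter.Tendsto (fun l => u (x l) - v (x l)) Filter.atTop (nhds L) := by
  have hmem : ∀ l, x l ∈ Ω := by
    intro l
    induction l with
    | zero => exact hx0
    | succ k _ => exact (hstep k).1
  have hmono : ∀ l, u (x (l + 1)) - v (x (l + 1)) ≤ u (x l) - v (x l) := by
    intro l
    have h1 := (hstep l).2 (x l) (hmem l)
    have h2 := grad_ineq hv hvd (x l) (x (l + 1))
    have h3 : (fderiv ℝ v (x l)) (x (l+1) - x l)
        = fderiv ℝ v (x l) (x (l+1)) - fderiv ℝ v (x l) (x l) := by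
      simp [map_sub]
    linarith [h3 ▸ h2]
  refine ⟨hmono, ?_⟩
  -- continuity of u and v
  have hucont : Continuous u := by
    have := hu.continuousOn isOpen_univ
    exact continuousOn_univ.mp this
  have hvcont : Continuous v := hvd.continuous
  have hcont : Continuous fun p => u p - v p := hucont.sub hvcont
  obtain ⟨m, hmΩ, hmin⟩ := hcomp.exists_isMinOn hne hcont.continuousOn
  have hanti : Antitone fun l => u (x l) - v (x l) :=
    antitone_nat_of_succ_le hmono
  have hbdd : BddBelow (Set.range fun l => u (x l) - v (x l)) := by
    refine ⟨u m - v m, ?_⟩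
    rintro r ⟨l, rfl⟩
    exact hmin (hmem l)
  exact ⟨_, tendsto_atTop_ciInf hanti hbdd⟩
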